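/- Let N ≥ 2, α > 0, and r > 1. For every β > r there exists a constant C = C(β, N, r) > 0 such that (φ_N(α u))^r ≤ C · φ_N(β α u) for all u ≥ 0. -/

import Mathlib

/-- φ_N(t) = e^t − Σ_{j=0}^{N−2} t^j/j! -/
noncomputable def phiN (N : ℕ) (t : ℝ) : ℝ :=
  Real.exp t - ∑ j ∈ Finset.range (N - 1), t ^ j / (Nat.factorial j : ℝ)

lemma real_exp_eq_tsum (t : ℝ) : Real.exp t = ∑' n : ℕ, t ^ n / (Nat.factorial n : ℝ) := by
  rw [Real.exp_eq_exp_ℝ, NormedSpace.exp_eq_tsum_div]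

lemma phiN_eq (N : ℕ) (t : ℝ) :
    phiN N t = ∑' k : ℕ, t ^ (k + (N - 1)) / (Nat.factorial (k + (N - 1)) : ℝ) := by
  have hs := Real.summable_pow_div_factorial t
  have h := Summable.sum_add_tsum_nat_add (f := fun n : ℕ => t ^ n / (Nat.factorial n : ℝ)) (N - 1) hs
  rw [phiN, real_exp_eq_tsum, ← h]
  ring

lemma summable_shift (t : ℝ) (m : ℕ) :
    Summable (fun k : ℕ => t ^ (k + m) / (Nat.factorial (k + m) : ℝ)) :=
  ((summable_nat_add_iff m).mpr (Real.summable_pow_div_factorial t))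

lemma phiN_nonneg (N : ℕ) {t : ℝ} (ht : 0 ≤ t) : 0 ≤ phiN N t := by
  rw [phiN_eq]
  exact tsum_nonneg fun k => div_nonneg (pow_nonneg ht _) (Nat.cast_nonneg _)

lemma pow_div_fact_le_exp {x : ℝ} (hx : 0 ≤ x) (n : ℕ) :
    x ^ n / (Nat.factorial n : ℝ) ≤ Real.exp x := by
  rw [real_exp_eq_tsum]
  exact Summable.le_tsum (Real.summable_pow_div_factorial x) n
    (fun k _ => div_nonneg (pow_nonneg hx _) (Nat.cast_nonneg _))

/-- Upper bound: φ_N(t) ≤ t^(N-1) · e^t for t ≥ 0. -/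
lemma phiN_le {N : ℕ} {t : ℝ} (ht : 0 ≤ t) :
    phiN N t ≤ t ^ (N - 1) * Real.exp t := by
  set m := N - 1
  rw [phiN_eq, real_exp_eq_tsum, ← tsum_mul_left]
  refine Summable.tsum_le_tsum (fun k => ?_) (summable_shift t m)
    ((Real.summable_pow_div_factorial t).mul_left _)
  have h1 : (Nat.factorial k : ℝ) ≤ (Nat.factorial (k + m) : ℝ) := by
    exact_mod_cast Nat.factorial_le (Nat.le_add_right k m)
  have h2 : (0:ℝ) < Nat.factorial k := by exact_mod_cast (Nat.factorial_pos k)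
  calc t ^ (k + m) / (Nat.factorial (k + m) : ℝ)
      ≤ t ^ (k + m) / (Nat.factorial k : ℝ) := by
        apply div_le_div_of_nonneg_left (pow_nonneg ht _) h2 h1
    _ = t ^ m * (t ^ k / (Nat.factorial k : ℝ)) := by
        rw [pow_add]; ring

/-- Lower bound: e^a · b^(N-1)/(N-1)! ≤ φ_N(a+b) for a, b ≥ 0. -/
lemma le_phiN {N : ℕ} {a b : ℝ} (ha : 0 ≤ a) (hb : 0 ≤ b) :
    Real.exp a * (b ^ (N - 1) / (Nat.factorial (N - 1) : ℝ)) ≤ phiN N (a + b) := by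
  set m := N - 1
  rw [phiN_eq, real_exp_eq_tsum, ← tsum_mul_right]
  refine Summable.tsum_le_tsum (fun k => ?_)
    ((Real.summable_pow_div_factorial a).mul_right _) (summable_shift (a+b) m)
  have key : (Nat.choose (k + m) k : ℝ) * a ^ k * b ^ m ≤ (a + b) ^ (k + m) := by
    rw [add_pow]
    have hk : k ∈ Finset.range (k + m + 1) := by
      simp [Nat.lt_succ_iff]
    have := Finset.single_le_sum (f := fun i =>
        a ^ i * b ^ (k + m - i) * (Nat.choose (k + m) i : ℝ))
      (fun i _ => by positivity) hk
    simpa [Nat.add_sub_cancel_left, mul_comm, mul_assoc, mul_left_comm] using this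
  have hfact : (Nat.factorial k : ℝ) * (Nat.factorial m : ℝ) * (Nat.choose (k + m) k : ℝ)
      = (Nat.factorial (k + m) : ℝ) := by
    have := Nat.choose_mul_factorial_mul_factorial (Nat.le_add_right k m)
    have h2 : Nat.choose (k+m) k * Nat.factorial k * Nat.factorial (k+m-k)
        = Nat.factorial (k+m) := this
    rw [Nat.add_sub_cancel_left] at h2
    exact_mod_cast by rw [← h2]; push_cast; ring
  have hkpos : (0:ℝ) < Nat.factorial k := by exact_mod_cast Nat.factorial_pos k
  have hmpos : (0:ℝ) < Nat.factorial m := by exact_mod_cast Nat.factorial_pos m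
  have hkm : (0:ℝ) < Nat.factorial (k + m) := by exact_mod_cast Nat.factorial_pos (k+m)
  rw [div_mul_div_comm, div_le_div_iff₀ (by positivity) hkm]
  calc a ^ k * b ^ m * (Nat.factorial (k + m) : ℝ)
      = ((Nat.choose (k + m) k : ℝ) * a ^ k * b ^ m) * ((Nat.factorial k : ℝ) * Nat.factorial m) := by
        rw [← hfact]; ring
    _ ≤ (a + b) ^ (k + m) * ((Nat.factorial k : ℝ) * Nat.factorial m) := by
        apply mul_le_mul_of_nonneg_right key (by positivity)

lemma rpow_le_const_mul_exp {p ε : ℝ} (hp : 0 < p) (hε : 0 < ε) :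
    ∃ K : ℝ, 1 ≤ K ∧ ∀ t : ℝ, 0 < t → t ^ p ≤ K * Real.exp (ε * t) := by
  set n := ⌈p⌉₊
  refine ⟨1 + (Nat.factorial n : ℝ) / ε ^ n, le_add_of_nonneg_right (by positivity),
    fun t ht => ?_⟩
  have hexp : (0:ℝ) < Real.exp (ε * t) := Real.exp_pos _
  rcases le_total t 1 with h1 | h1
  · have : t ^ p ≤ 1 := Real.rpow_le_one ht.le h1 hp.le
    calc t ^ p ≤ 1 := this
      _ ≤ 1 * Real.exp (ε * t) := by
          rw [one_mul]; exact Real.one_le_exp (by positivity)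
      _ ≤ (1 + (Nat.factorial n : ℝ) / ε ^ n) * Real.exp (ε * t) := by
          apply mul_le_mul_of_nonneg_right _ hexp.le
          exact le_add_of_nonneg_right (by positivity)
  · have h2 : t ^ p ≤ t ^ (n : ℝ) :=
      Real.rpow_le_rpow_of_exponent_le h1 (Nat.le_ceil p)
    rw [Real.rpow_natCast] at h2
    have h3 : (ε * t) ^ n / (Nat.factorial n : ℝ) ≤ Real.exp (ε * t) :=
      pow_div_fact_le_exp (by positivity) n
    have h4 : t ^ n ≤ (Nat.factorial n : ℝ) / ε ^ n * Real.exp (ε * t) := by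
      rw [mul_pow] at h3
      have hfn : (0:ℝ) < Nat.factorial n := by exact_mod_cast Nat.factorial_pos n
      rw [div_mul_eq_mul_div, le_div_iff₀ (pow_pos hε n)]
      have h5 := (div_le_iff₀ hfn).mp h3
      calc t ^ n * ε ^ n = ε ^ n * t ^ n := mul_comm _ _
        _ ≤ Real.exp (ε * t) * (Nat.factorial n : ℝ) := h5
        _ = (Nat.factorial n : ℝ) * Real.exp (ε * t) := mul_comm _ _
    calc t ^ p ≤ t ^ n := h2
      _ ≤ (Nat.factorial n : ℝ) / ε ^ n * Real.exp (ε * t) := h4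
      _ ≤ (1 + (Nat.factorial n : ℝ) / ε ^ n) * Real.exp (ε * t) := by
          apply mul_le_mul_of_nonneg_right _ hexp.le; linarith

/-- Let N ≥ 2, α > 0, r > 1. For every β > r there is C > 0 such that
(φ_N(α u))^r ≤ C · φ_N(β α u) for all u ≥ 0. -/
theorem stmt_4 (N : ℕ) (hN : 2 ≤ N) (α r β : ℝ) (hα : 0 < α) (hr : 1 < r)
    (hβ : r < β) :
    ∃ C : ℝ, 0 < C ∧ ∀ u : ℝ, 0 ≤ u →
      (phiN N (α * u)) ^ r ≤ C * phiN N (β * α * u) := by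
  set m := N - 1 with hm
  have hm1 : 1 ≤ m := by omega
  set ε := (β - r) / 2 with hεdef
  have hε : 0 < ε := by simp [hεdef]; linarith
  set r' := (β + r) / 2 with hr'def
  have hr'pos : 0 < r' := by simp [hr'def]; nlinarith
  have hrε : r + ε = r' := by rw [hεdef, hr'def]; ring
  have hr'ε : r' + ε = β := by rw [hεdef, hr'def]; ring
  have hp : 0 < (m : ℝ) * (r - 1) := by
    apply mul_pos (by exact_mod_cast hm1) (by linarith)
  obtain ⟨K, hK1, hK⟩ := rpow_le_const_mul_exp hp hε
  have hKpos : 0 < K := lt_of_lt_of_le one_pos hK1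
  have hfm : (0:ℝ) < Nat.factorial m := by exact_mod_cast Nat.factorial_pos m
  clear_value ε r'
  refine ⟨K * (Nat.factorial m : ℝ) / ε ^ m, by positivity, fun u hu => ?_⟩
  set t := α * u with htdef
  clear_value t
  have ht : 0 ≤ t := by rw [htdef]; positivity
  rcases eq_or_lt_of_le ht with ht0 | ht0
  · -- t = 0
    have hphi0 : phiN N 0 = 0 := by
      rw [phiN_eq]
      have : ∀ k : ℕ, (0:ℝ) ^ (k + m) / (Nat.factorial (k + m) : ℝ) = 0 := by
        intro k
        rw [zero_pow (by omega), zero_div]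
      exact (tsum_congr this).trans tsum_zero
    have hβt : β * α * u = 0 := by
      rw [mul_assoc, ← htdef, ← ht0, mul_zero]
    rw [hβt, ← ht0, hphi0, Real.zero_rpow (by linarith : r ≠ 0), mul_zero]
  · -- t > 0
    -- lower bound on phiN N (β t)
    have hβt : β * α * u = r' * t + ε * t := by
      rw [mul_assoc, ← htdef, ← hr'ε]; ring
    have hlow : Real.exp (r' * t) * ((ε * t) ^ m / (Nat.factorial m : ℝ))
        ≤ phiN N (β * α * u) := by
      rw [hβt]
      exact le_phiN (by positivity) (by positivity)
    -- upper bound on phiN N t ^ r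
    have hub : phiN N t ≤ t ^ m * Real.exp t := phiN_le ht
    have h1 : phiN N t ^ r ≤ (t ^ m * Real.exp t) ^ r :=
      Real.rpow_le_rpow (phiN_nonneg N ht) hub (by linarith)
    have h2 : (t ^ m * Real.exp t) ^ r
        = t ^ ((m : ℝ) * r) * Real.exp (r * t) := by
      rw [Real.mul_rpow (by positivity) (Real.exp_pos t).le,
        ← Real.rpow_natCast t m, ← Real.rpow_mul ht,
        Real.rpow_def_of_pos (Real.exp_pos t), Real.log_exp, mul_comm t r]
    have h3 : t ^ ((m : ℝ) * r)
        = t ^ (m : ℕ) * t ^ ((m : ℝ) * (r - 1)) := by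
      rw [← Real.rpow_natCast t m, ← Real.rpow_add ht0]
      ring_nf
    have h4 : t ^ ((m : ℝ) * (r - 1)) ≤ K * Real.exp (ε * t) := hK t ht0
    have key : phiN N t ^ r ≤ K * (t ^ m * Real.exp (r' * t)) := by
      rw [h2, h3] at h1
      calc phiN N t ^ r
          ≤ t ^ m * t ^ ((m : ℝ) * (r - 1)) * Real.exp (r * t) := h1
        _ ≤ t ^ m * (K * Real.exp (ε * t)) * Real.exp (r * t) := by
            apply mul_le_mul_of_nonneg_right _ (Real.exp_pos _).le
            exact mul_le_mul_of_nonneg_left h4 (by positivity)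
        _ = K * (t ^ m * (Real.exp (ε * t) * Real.exp (r * t))) := by ring
        _ = K * (t ^ m * Real.exp (r' * t)) := by
            rw [← Real.exp_add, show ε * t + r * t = r' * t by rw [← hrε]; ring]
    calc phiN N t ^ r ≤ K * (t ^ m * Real.exp (r' * t)) := key
      _ = K * (Nat.factorial m : ℝ) / ε ^ m
          * (Real.exp (r' * t) * ((ε * t) ^ m / (Nat.factorial m : ℝ))) := by
          rw [mul_pow]
          field_simp
      _ ≤ K * (Nat.factorial m : ℝ) / ε ^ m * phiN N (β * α * u) := by
          apply mul_le_mul_of_nonneg_left hlow (by positivity)
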